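/- Let Z follow a Beta(a,b) distribution with a, b > 0. If z < a/(a+b) then P(Z ≤ z) < z^a (1−z)^b / (B(a,b)·(a − (a+b)z)), and if z > a/(a+b) then P(Z > z) < z^a (1−z)^b / (B(a,b)·((a+b)z − a)). -/

import Mathlib

open MeasureTheory Real

/-- The Beta function `B(a,b) = Γ(a)Γ(b)/Γ(a+b)`. -/
noncomputable def betaFun (a b : ℝ) : ℝ := Real.Gamma a * Real.Gamma b / Real.Gamma (a + b)

/-- The density of the Beta(a,b) distribution on `[0,1]`. -/
noncomputable def betaPDF (a b x : ℝ) : ℝ :=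
  if x ∈ Set.Icc (0 : ℝ) 1 then x ^ (a - 1) * (1 - x) ^ (b - 1) / betaFun a b else 0

private lemma f0_int_left {a : ℝ} (b : ℝ) (ha : 0 < a) {z : ℝ} (hz0 : 0 ≤ z) (hz1 : z < 1) :
    IntervalIntegrable (fun x => x ^ (a - 1) * (1 - x) ^ (b - 1)) volume 0 z := by
  apply (intervalIntegral.intervalIntegrable_rpow' (by linarith : (-1:ℝ) < a - 1)).mul_continuousOn
  apply ContinuousOn.rpow_const (continuousOn_const.sub continuousOn_id)
  intro x hx
  rw [Set.uIcc_of_le hz0] at hx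
  exact Or.inl (ne_of_gt (by simp only [Pi.sub_apply, id]; nlinarith [hx.2]))

private lemma f0_int_right {b : ℝ} (a : ℝ) (hb : 0 < b) {z : ℝ} (hz0 : 0 < z) (hz1 : z ≤ 1) :
    IntervalIntegrable (fun x => x ^ (a - 1) * (1 - x) ^ (b - 1)) volume z 1 := by
  have h1 : IntervalIntegrable (fun x => (1 - x) ^ (b - 1)) volume z 1 := by
    have := (intervalIntegral.intervalIntegrable_rpow'
      (by linarith : (-1:ℝ) < b - 1) (a := 1 - z) (b := 0)).comp_sub_left 1
    simpa using this
  apply h1.continuousOn_mul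
  apply ContinuousOn.rpow_const continuousOn_id
  intro x hx
  rw [Set.uIcc_of_le hz1] at hx
  exact Or.inl (by simp only [id]; nlinarith [hx.1])

private lemma g_deriv {a b x : ℝ} (hx0 : 0 < x) (hx1 : x < 1) :
    HasDerivAt (fun x => x ^ a * (1 - x) ^ b)
      (x ^ (a - 1) * (1 - x) ^ (b - 1) * (a - (a + b) * x)) x := by
  have h1 : HasDerivAt (fun x : ℝ => x ^ a) (a * x ^ (a - 1)) x :=
    Real.hasDerivAt_rpow_const (Or.inl hx0.ne')
  have h2 : HasDerivAt (fun x : ℝ => (1 - x) ^ b) (b * (1 - x) ^ (b - 1) * (-1)) x := by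
    have hinner : HasDerivAt (fun x : ℝ => 1 - x) (-1) x := (hasDerivAt_id x).const_sub 1
    exact (Real.hasDerivAt_rpow_const (Or.inl (by linarith : (1:ℝ) - x ≠ 0))).comp x hinner
  have := h1.mul h2
  refine this.congr_deriv ?_
  have hxa : x ^ a = x ^ (a - 1) * x := by
    rw [← Real.rpow_add_one hx0.ne']; ring_nf
  have hxb : (1 - x) ^ b = (1 - x) ^ (b - 1) * (1 - x) := by
    rw [← Real.rpow_add_one (by linarith : (1:ℝ) - x ≠ 0)]; ring_nf
  rw [hxa, hxb]; ring

private lemma ftc {a b : ℝ} (ha : 0 < a) (hb : 0 < b) {u v : ℝ} (huv : u ≤ v) (hu : 0 ≤ u)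
    (hv : v ≤ 1)
    (hint : IntervalIntegrable (fun x => x ^ (a-1) * (1-x) ^ (b-1) * (a - (a+b) * x)) volume u v) :
    ∫ x in u..v, x ^ (a-1) * (1-x) ^ (b-1) * (a - (a+b) * x)
      = v ^ a * (1-v) ^ b - u ^ a * (1-u) ^ b := by
  apply intervalIntegral.integral_eq_sub_of_hasDeriv_right_of_le huv _ _ hint
  · apply ContinuousOn.mul
    · exact ContinuousOn.rpow_const continuousOn_id fun x _ => Or.inr ha.le
    · exact ContinuousOn.rpow_const (continuousOn_const.sub continuousOn_id)
        fun x _ => Or.inr hb.le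
  · intro x hx
    exact (g_deriv (lt_of_le_of_lt hu hx.1) (lt_of_lt_of_le hx.2 hv)).hasDerivWithinAt

private lemma tail_lt {a b c : ℝ} {u v : ℝ} (ha : 0 < a) (hb : 0 < b)
    (hu : 0 ≤ u) (hv : v ≤ 1) (huv : u < v)
    (hf0 : IntervalIntegrable (fun x => x ^ (a-1) * (1-x) ^ (b-1)) volume u v)
    (hcs : ∀ x ∈ Set.Ioo u v, 0 < (a - (a+b) * x) - c) :
    (∫ x in u..v, x ^ (a-1) * (1-x) ^ (b-1)) * c
      < v ^ a * (1-v) ^ b - u ^ a * (1-u) ^ b := by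
  have hint1 : IntervalIntegrable (fun x => x ^ (a-1) * (1-x) ^ (b-1) * (a - (a+b) * x))
      volume u v := hf0.mul_continuousOn (Continuous.continuousOn (by continuity))
  have hint2 := hf0.mul_const c
  have hpos : 0 < ∫ x in u..v,
      (x ^ (a-1) * (1-x) ^ (b-1) * (a - (a+b) * x) - x ^ (a-1) * (1-x) ^ (b-1) * c) := by
    apply intervalIntegral.intervalIntegral_pos_of_pos_on (hint1.sub hint2) _ huv
    intro x hx
    have h1 : 0 < x ^ (a-1) := Real.rpow_pos_of_pos (lt_of_le_of_lt hu hx.1) _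
    have h2 : 0 < (1-x) ^ (b-1) :=
      Real.rpow_pos_of_pos (by linarith [lt_of_lt_of_le hx.2 hv] : (0:ℝ) < 1 - x) _
    have h3 := hcs x hx
    nlinarith [mul_pos (mul_pos h1 h2) h3]
  rw [intervalIntegral.integral_sub hint1 hint2, intervalIntegral.integral_mul_const,
    ftc ha hb huv.le hu hv hint1] at hpos
  linarith

private lemma tail_lt2 {a b c : ℝ} {u v : ℝ} (ha : 0 < a) (hb : 0 < b)
    (hu : 0 ≤ u) (hv : v ≤ 1) (huv : u < v)
    (hf0 : IntervalIntegrable (fun x => x ^ (a-1) * (1-x) ^ (b-1)) volume u v)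
    (hcs : ∀ x ∈ Set.Ioo u v, 0 < ((a+b) * x - a) - c) :
    (∫ x in u..v, x ^ (a-1) * (1-x) ^ (b-1)) * c
      < u ^ a * (1-u) ^ b - v ^ a * (1-v) ^ b := by
  have hint1 : IntervalIntegrable (fun x => x ^ (a-1) * (1-x) ^ (b-1) * ((a+b) * x - a))
      volume u v := hf0.mul_continuousOn (Continuous.continuousOn (by continuity))
  have hint1' : IntervalIntegrable (fun x => x ^ (a-1) * (1-x) ^ (b-1) * (a - (a+b) * x))
      volume u v := hf0.mul_continuousOn (Continuous.continuousOn (by continuity))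
  have hint2 := hf0.mul_const c
  have hpos : 0 < ∫ x in u..v,
      (x ^ (a-1) * (1-x) ^ (b-1) * ((a+b) * x - a) - x ^ (a-1) * (1-x) ^ (b-1) * c) := by
    apply intervalIntegral.intervalIntegral_pos_of_pos_on (hint1.sub hint2) _ huv
    intro x hx
    have h1 : 0 < x ^ (a-1) := Real.rpow_pos_of_pos (lt_of_le_of_lt hu hx.1) _
    have h2 : 0 < (1-x) ^ (b-1) :=
      Real.rpow_pos_of_pos (by linarith [lt_of_lt_of_le hx.2 hv] : (0:ℝ) < 1 - x) _
    have h3 := hcs x hx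
    nlinarith [mul_pos (mul_pos h1 h2) h3]
  have hfun : (fun x => x ^ (a-1) * (1-x) ^ (b-1) * ((a+b) * x - a))
      = fun x => -(x ^ (a-1) * (1-x) ^ (b-1) * (a - (a+b) * x)) := by
    funext x; ring
  rw [intervalIntegral.integral_sub hint1 hint2, intervalIntegral.integral_mul_const,
    hfun, intervalIntegral.integral_neg, ftc ha hb huv.le hu hv hint1'] at hpos
  linarith

private lemma betaFun_pos {a b : ℝ} (ha : 0 < a) (hb : 0 < b) : 0 < betaFun a b :=
  div_pos (mul_pos (Real.Gamma_pos_of_pos ha) (Real.Gamma_pos_of_pos hb))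
    (Real.Gamma_pos_of_pos (by linarith))

/-- Sharp bounds for the Beta CDF: if `Z ~ Beta(a,b)` with `a, b > 0`, then for
`z < a/(a+b)` one has `P(Z ≤ z) < z^a (1−z)^b / (B(a,b)(a − (a+b)z))`, and for
`z > a/(a+b)` one has `P(Z > z) < z^a (1−z)^b / (B(a,b)((a+b)z − a))`. -/
theorem beta_cdf_sharp_bounds (a b z : ℝ) (ha : 0 < a) (hb : 0 < b)
    (hz : z ∈ Set.Ioo (0 : ℝ) 1) :
    (z < a / (a + b) →
      (∫ x in Set.Iic z, betaPDF a b x) <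
        z ^ a * (1 - z) ^ b / (betaFun a b * (a - (a + b) * z))) ∧
    (a / (a + b) < z →
      (∫ x in Set.Ioi z, betaPDF a b x) <
        z ^ a * (1 - z) ^ b / (betaFun a b * ((a + b) * z - a))) := by
  obtain ⟨hz0, hz1⟩ := hz
  have hab : (0:ℝ) < a + b := by linarith
  have hB : 0 < betaFun a b := betaFun_pos ha hb
  constructor
  · -- lower tail
    intro hlt
    have hc : 0 < a - (a + b) * z := by
      have := (lt_div_iff₀ hab).mp hlt; linarith
    have hf0 := f0_int_left b ha hz0.le hz1
    -- rewrite the set integral as an interval integral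
    have hkey : (∫ x in Set.Iic z, betaPDF a b x)
        = (∫ x in (0:ℝ)..z, x ^ (a-1) * (1-x) ^ (b-1)) / betaFun a b := by
      have hset : Set.Iic z = Set.Iio 0 ∪ Set.Icc 0 z := by
        ext x
        simp only [Set.mem_Iic, Set.mem_union, Set.mem_Iio, Set.mem_Icc]
        constructor
        · intro h
          rcases lt_or_ge x 0 with h' | h'
          · exact Or.inl h'
          · exact Or.inr ⟨h', h⟩
        · rintro (h | ⟨h1, h2⟩)
          · linarith
          · exact h2
      have hz01 : ∀ x ∈ Set.Icc (0:ℝ) z, betaPDF a b x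
          = x ^ (a-1) * (1-x) ^ (b-1) / betaFun a b := by
        intro x hx
        have : x ∈ Set.Icc (0:ℝ) 1 := ⟨hx.1, le_trans hx.2 hz1.le⟩
        simp [betaPDF, this]
      have hIio : ∀ x ∈ Set.Iio (0:ℝ), betaPDF a b x = 0 := by
        intro x hx
        simp only [Set.mem_Iio] at hx
        simp [betaPDF, Set.mem_Icc, not_le.mpr hx]
      have hintIcc : IntegrableOn (betaPDF a b) (Set.Icc 0 z) volume := by
        rw [integrableOn_congr_fun hz01 measurableSet_Icc,
          integrableOn_Icc_iff_integrableOn_Ioc]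
        exact (intervalIntegrable_iff_integrableOn_Ioc_of_le hz0.le).mp (hf0.div_const _)
      have hintIio : IntegrableOn (betaPDF a b) (Set.Iio 0) volume := by
        rw [integrableOn_congr_fun hIio measurableSet_Iio]
        exact integrableOn_zero
      rw [hset, setIntegral_union (by
            rw [Set.disjoint_left]
            rintro x hx ⟨h0, _⟩
            exact absurd h0 (not_le.mpr hx)) measurableSet_Icc hintIio hintIcc,
        setIntegral_congr_fun measurableSet_Iio hIio,
        setIntegral_congr_fun measurableSet_Icc hz01,
        MeasureTheory.integral_Icc_eq_integral_Ioc,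
        ← intervalIntegral.integral_of_le hz0.le, intervalIntegral.integral_div]
      simp
    rw [hkey]
    have hmain := tail_lt (c := a - (a+b)*z) ha hb le_rfl hz1.le hz0 hf0
      (by intro x hx; obtain ⟨h1, h2⟩ := hx; nlinarith)
    rw [Real.zero_rpow ha.ne'] at hmain
    rw [div_lt_div_iff₀ hB (mul_pos hB hc)]
    nlinarith
  · -- upper tail
    intro hlt
    have hc : 0 < (a + b) * z - a := by
      have := (div_lt_iff₀ hab).mp hlt; linarith
    have hf0 := f0_int_right a hb hz0 hz1.le
    have hkey : (∫ x in Set.Ioi z, betaPDF a b x)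
        = (∫ x in z..(1:ℝ), x ^ (a-1) * (1-x) ^ (b-1)) / betaFun a b := by
      have hset : Set.Ioi z = Set.Ioc z 1 ∪ Set.Ioi 1 := (Set.Ioc_union_Ioi_eq_Ioi hz1.le).symm
      have hz01 : ∀ x ∈ Set.Ioc z (1:ℝ), betaPDF a b x
          = x ^ (a-1) * (1-x) ^ (b-1) / betaFun a b := by
        intro x hx
        have : x ∈ Set.Icc (0:ℝ) 1 := ⟨by linarith [hx.1], hx.2⟩
        simp [betaPDF, this]
      have hIoi : ∀ x ∈ Set.Ioi (1:ℝ), betaPDF a b x = 0 := by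
        intro x hx
        simp only [Set.mem_Ioi] at hx
        simp [betaPDF, Set.mem_Icc, not_le.mpr hx]
      have hintIoc : IntegrableOn (betaPDF a b) (Set.Ioc z 1) volume := by
        rw [integrableOn_congr_fun hz01 measurableSet_Ioc]
        exact (intervalIntegrable_iff_integrableOn_Ioc_of_le hz1.le).mp (hf0.div_const _)
      have hintIoi : IntegrableOn (betaPDF a b) (Set.Ioi 1) volume := by
        rw [integrableOn_congr_fun hIoi measurableSet_Ioi]
        exact integrableOn_zero
      rw [hset, setIntegral_union (by
            rw [Set.disjoint_left]
            rintro x hx h1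
            exact absurd hx.2 (not_le.mpr h1)) measurableSet_Ioi hintIoc hintIoi,
        setIntegral_congr_fun measurableSet_Ioc hz01,
        setIntegral_congr_fun measurableSet_Ioi hIoi,
        ← intervalIntegral.integral_of_le hz1.le, intervalIntegral.integral_div]
      simp
    rw [hkey]
    have hmain := tail_lt2 (c := (a+b)*z - a) ha hb hz0.le le_rfl hz1 hf0
      (by intro x hx; obtain ⟨h1, h2⟩ := hx; nlinarith)
    simp only [sub_self, Real.zero_rpow hb.ne', mul_zero, sub_zero] at hmain
    rw [div_lt_div_iff₀ hB (mul_pos hB hc)]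
    nlinarith
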